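/- Let F : ℝ → ℝ be an increasing homeomorphism with F(x+1) = F(x)+1 for all x, and for t ∈ ℝ set F_t(x) := F(x) + t. Then: (i) the map t ↦ Trans(F_t) is continuous and nondecreasing; (ii) Trans(F_{t+1}) = Trans(F_t) + 1 for all t; (iii) for every α ∈ ℝ the set I_α = {t ∈ ℝ : Trans(F_t) = α} is a nonempty closed bounded interval; (iv) if α is irrational then I_α consists of a single point; (v) for coprime integers p, q with q ≥ 1, I_{p/q} is the single point {t₀} if and only if F_{t₀}^{∘q}(x) = x + p for all x ∈ ℝ. -/

import Mathlib

open Filter Topology Set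

/-- `τ` is the translation number of `F`: for every `x`, `(F^[n] x - x)/n → τ`. -/
def IsTransNum (F : ℝ → ℝ) (τ : ℝ) : Prop :=
  ∀ x : ℝ, Filter.Tendsto (fun n : ℕ => (F^[n] x - x) / n) Filter.atTop (nhds τ)

/-- The lift `x ↦ F x + t` as a `CircleDeg1Lift`. -/
noncomputable def gmap (F : ℝ → ℝ) (hm : Monotone F) (hd : ∀ x, F (x + 1) = F x + 1) (t : ℝ) :
    CircleDeg1Lift :=
  ⟨⟨fun x => F x + t, fun _ _ h => add_le_add_left (hm h) t⟩, fun x => by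
    dsimp only; rw [hd]; ring⟩

/-- Density of `{n α - p : n ≥ 1}` near `0⁺` for irrational `α`. -/
lemma dens_aux {α ε : ℝ} (hα : Irrational α) (hε : 0 < ε) (hε1 : ε < 1) :
    ∃ (n : ℕ) (p : ℤ), 1 ≤ n ∧ 0 < n * α - p ∧ n * α - p < ε := by
  classical
  set S : AddSubgroup ℝ :=
    { carrier := {x | ∃ m k : ℤ, x = m + k * α}
      zero_mem' := ⟨0, 0, by simp⟩
      add_mem' := by
        rintro a b ⟨m, k, rfl⟩ ⟨m', k', rfl⟩
        exact ⟨m + m', k + k', by push_cast; ring⟩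
      neg_mem' := by
        rintro a ⟨m, k, rfl⟩
        exact ⟨-m, -k, by push_cast; ring⟩ } with hSdef
  have h1S : (1:ℝ) ∈ S := ⟨1, 0, by simp⟩
  have hαS : α ∈ S := ⟨0, 1, by simp⟩
  have hdense : Dense (S : Set ℝ) := by
    rcases S.dense_or_cyclic with h | ⟨a, ha⟩
    · exact h
    · exfalso
      rw [ha, AddSubgroup.mem_closure_singleton] at h1S hαS
      obtain ⟨k, hk⟩ := h1S
      obtain ⟨l, hl⟩ := hαS
      simp only [zsmul_eq_mul] at hk hl
      have hk0 : (k:ℝ) ≠ 0 := by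
        rintro h0; rw [h0, zero_mul] at hk; norm_num at hk
      refine hα ⟨(l : ℚ) / (k : ℚ), ?_⟩
      push_cast
      rw [div_eq_iff hk0]
      calc (l:ℝ) = l * (k * a) := by rw [hk, mul_one]
        _ = (l * a) * k := by ring
        _ = α * k := by rw [hl]
  obtain ⟨s, hsS, hs⟩ := hdense.exists_mem_open isOpen_Ioo
    (⟨ε/2, by constructor <;> linarith⟩ : (Ioo (0:ℝ) ε).Nonempty)
  obtain ⟨hs0, hsε⟩ := hs
  obtain ⟨m, k, hs_eq⟩ := hsS
  rcases lt_trichotomy k 0 with hk | hk | hk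
  · -- k < 0 : use 1 - K * s
    set K : ℤ := ⌊(1 - ε)/s⌋ + 1 with hKdef
    have hK1 : 1 ≤ K := by
      have : 0 ≤ ⌊(1 - ε)/s⌋ := Int.floor_nonneg.2 (div_nonneg (by linarith) hs0.le)
      omega
    have hK1R : (1:ℝ) ≤ K := by exact_mod_cast hK1
    have hfl : ((⌊(1 - ε)/s⌋ : ℤ) : ℝ) ≤ (1 - ε)/s := Int.floor_le _
    have hKs_lt : (K:ℝ) * s < 1 := by
      have h1 : (K:ℝ) ≤ (1 - ε)/s + 1 := by push_cast [hKdef]; linarith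
      have h2 : (K:ℝ) * s ≤ ((1 - ε)/s + 1) * s := by
        exact mul_le_mul_of_nonneg_right h1 hs0.le
      have h3 : ((1 - ε)/s + 1) * s = (1 - ε) + s := by
        field_simp
      linarith
    have hKs_gt : 1 - ε < (K:ℝ) * s := by
      have h1 : (1 - ε)/s < (K:ℝ) := by
        push_cast [hKdef]
        exact Int.lt_floor_add_one _
      calc 1 - ε = ((1 - ε)/s) * s := by field_simp
        _ < (K:ℝ) * s := by exact mul_lt_mul_of_pos_right h1 hs0
    have hKk : 1 ≤ -(K * k) := by nlinarith
    refine ⟨(-(K * k)).toNat, K * m - 1, by omega, ?_, ?_⟩ <;>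
    · have hcast : (((-(K * k)).toNat : ℕ) : ℝ) = -((K:ℝ) * (k:ℝ)) := by
        have h := Int.toNat_of_nonneg (show (0:ℤ) ≤ -(K * k) by omega)
        have h2 : (((-(K * k)).toNat : ℤ) : ℝ) = ((-(K * k) : ℤ) : ℝ) := by rw [h]
        push_cast at h2
        linarith
      have hval : (((-(K * k)).toNat : ℕ) : ℝ) * α - ((K * m - 1 : ℤ) : ℝ)
          = 1 - (K:ℝ) * s := by
        rw [hcast, hs_eq]; push_cast; ring
      rw [hval]
      linarith
  · -- k = 0 : impossible, s would be an integer in (0,1)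
    exfalso
    subst hk
    rw [hs_eq] at hs0 hsε
    push_cast at hs0 hsε
    have h0 : (0:ℝ) < m := by linarith
    have h0' : 0 < m := by exact_mod_cast h0
    have h1 : (1:ℝ) ≤ m := by exact_mod_cast h0'
    linarith
  · -- k > 0
    refine ⟨k.toNat, -m, by omega, ?_, ?_⟩ <;>
    · have hcast : ((k.toNat : ℕ) : ℝ) = (k:ℝ) := by
        exact_mod_cast Int.toNat_of_nonneg hk.le
      have hval : ((k.toNat : ℕ) : ℝ) * α - ((-m : ℤ) : ℝ) = s := by
        rw [hcast, hs_eq]; push_cast; ring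
      rw [hval]
      linarith

theorem stmt_1 (F : ℝ → ℝ)
    (hFmono : StrictMono F) (hFcont : Continuous F) (hFsurj : Function.Surjective F)
    (hFdeg : ∀ x : ℝ, F (x + 1) = F x + 1)
    (τ : ℝ → ℝ)
    (hτ : ∀ t : ℝ, IsTransNum (fun x => F x + t) (τ t)) :
    -- (i) continuity and monotonicity
    (Continuous τ ∧ Monotone τ) ∧
    -- (ii) τ(t+1) = τ(t) + 1
    (∀ t : ℝ, τ (t + 1) = τ t + 1) ∧
    -- (iii) each fiber is a nonempty closed bounded interval
    (∀ α : ℝ, ∃ tl tr : ℝ, tl ≤ tr ∧ {t : ℝ | τ t = α} = Set.Icc tl tr) ∧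
    -- (iv) irrational fibers are singletons
    (∀ α : ℝ, Irrational α → ∃! t : ℝ, τ t = α) ∧
    -- (v) rational fiber is a singleton iff the iterate is the translation by p
    (∀ (p : ℤ) (q : ℕ), 1 ≤ q → Nat.Coprime p.natAbs q → ∀ t₀ : ℝ,
      ({t : ℝ | τ t = (p : ℝ) / (q : ℝ)} = {t₀} ↔
        ∀ x : ℝ, (fun x => F x + t₀)^[q] x = x + (p : ℝ))) := by
  have hm : Monotone F := hFmono.monotone
  set g : ℝ → CircleDeg1Lift := gmap F hm hFdeg with hgdef
  have hgc : ∀ t, Continuous ⇑(g t) := fun t => hFcont.add continuous_const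
  have hgiter : ∀ (t : ℝ) (n : ℕ) (x : ℝ),
      ((g t)^n : CircleDeg1Lift) x = (fun y => F y + t)^[n] x := by
    intro t n x
    rw [CircleDeg1Lift.coe_pow]
    rfl
  -- identification of τ with Mathlib's translation number
  have htau : ∀ t, τ t = (g t).translationNumber := by
    intro t
    refine tendsto_nhds_unique (hτ t 0) ?_
    have h := (g t).tendsto_translationNumber 0
    refine h.congr fun n => ?_
    rw [hgiter]
  -- monotonicity of the iterates in `t`
  have itr_mono_t : ∀ (n : ℕ) (t t' : ℝ), t ≤ t' → ∀ x,
      (fun y => F y + t)^[n] x ≤ (fun y => F y + t')^[n] x := by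
    intro n
    induction n with
    | zero => intro t t' _ x; simp
    | succ n ih =>
      intro t t' h x
      rw [Function.iterate_succ_apply', Function.iterate_succ_apply']
      exact add_le_add (hm (ih t t' h x)) h
  have itr_shift : ∀ (n : ℕ), 1 ≤ n → ∀ (t t' : ℝ), t ≤ t' → ∀ x,
      (fun y => F y + t)^[n] x + (t' - t) ≤ (fun y => F y + t')^[n] x := by
    intro n hn t t' h x
    obtain ⟨n, rfl⟩ : ∃ m, n = m + 1 := ⟨n - 1, by omega⟩
    rw [Function.iterate_succ_apply', Function.iterate_succ_apply']
    have := hm (itr_mono_t n t t' h x)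
    show F ((fun y => F y + t)^[n] x) + t + (t' - t) ≤ F ((fun y => F y + t')^[n] x) + t'
    linarith
  -- continuity of the iterates in `t`
  have itr_cont : ∀ (n : ℕ) (x : ℝ), Continuous (fun t => (fun y => F y + t)^[n] x) := by
    intro n
    induction n with
    | zero => intro x; simpa using continuous_const
    | succ n ih =>
      intro x
      simp only [Function.iterate_succ_apply']
      exact (hFcont.comp (ih x)).add continuous_id
  -- monotonicity of τ
  have hmono : Monotone τ := by
    intro t t' h
    rw [htau, htau]
    exact CircleDeg1Lift.translationNumber_mono
      (fun x => add_le_add_right h (F x) : g t ≤ g t')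
  -- part (ii)
  have hii : ∀ t : ℝ, τ (t + 1) = τ t + 1 := by
    intro t
    rw [htau, htau]
    set T : CircleDeg1Lift :=
      ⟨⟨fun x => 1 + x, fun _ _ h => add_le_add_right h 1⟩, fun x => by ring⟩ with hT
    have hTτ : T.translationNumber = 1 := by
      have : T.translationNumber = ((1:ℤ):ℝ) :=
        T.translationNumber_of_eq_add_int (x := 0) (m := 1) (by show (1:ℝ) + 0 = 0 + ((1:ℤ):ℝ); norm_num)
      simpa using this
    have hmul : g (t + 1) = T * g t := by
      apply CircleDeg1Lift.ext
      intro x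
      show F x + (t + 1) = 1 + (F x + t)
      ring
    have hcomm : Commute T (g t) := by
      apply CircleDeg1Lift.ext
      intro x
      show 1 + (F x + t) = F (1 + x) + t
      rw [add_comm 1 x, hFdeg]
      ring
    rw [hmul, CircleDeg1Lift.translationNumber_mul_of_commute hcomm, hTτ]
    ring
  -- criterion lemmas
  have key_le : ∀ (t : ℝ) (p : ℤ) (q : ℕ), 0 < q → τ t < (p:ℝ)/(q:ℝ) →
      ∃ x, (fun y => F y + t)^[q] x < x + p := by
    intro t p q hq hlt
    by_contra hc
    push_neg at hc
    have h1 : (x:ℝ) → x + (p:ℝ) ≤ ((g t)^q : CircleDeg1Lift) x := by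
      intro x; rw [hgiter]; exact hc x
    have h2 := CircleDeg1Lift.le_translationNumber_of_add_int_le _ (h1 0)
    rw [CircleDeg1Lift.translationNumber_pow] at h2
    rw [htau] at hlt
    have hq' : (0:ℝ) < q := by exact_mod_cast hq
    rw [lt_div_iff₀ hq'] at hlt
    nlinarith
  have key_ge : ∀ (t : ℝ) (p : ℤ) (q : ℕ), 0 < q → (p:ℝ)/(q:ℝ) < τ t →
      ∃ x, x + p < (fun y => F y + t)^[q] x := by
    intro t p q hq hlt
    by_contra hc
    push_neg at hc
    have h1 : ((g t)^q : CircleDeg1Lift) 0 ≤ 0 + (p:ℝ) := by rw [hgiter]; exact hc 0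
    have h2 := CircleDeg1Lift.translationNumber_le_of_le_add_int _ h1
    rw [CircleDeg1Lift.translationNumber_pow] at h2
    rw [htau] at hlt
    have hq' : (0:ℝ) < q := by exact_mod_cast hq
    rw [div_lt_iff₀ hq'] at hlt
    nlinarith
  -- τ t ≤ p/q from a single point where the iterate is ≤ x + p
  have bound_le : ∀ (t : ℝ) (p : ℤ) (q : ℕ), 0 < q → ∀ x,
      (fun y => F y + t)^[q] x ≤ x + p → τ t ≤ (p:ℝ)/(q:ℝ) := by
    intro t p q hq x hx
    have h1 : ((g t)^q : CircleDeg1Lift) x ≤ x + (p:ℝ) := by rw [hgiter]; exact hx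
    have h2 := CircleDeg1Lift.translationNumber_le_of_le_add_int _ h1
    rw [CircleDeg1Lift.translationNumber_pow] at h2
    rw [htau]
    have hq' : (0:ℝ) < q := by exact_mod_cast hq
    rw [le_div_iff₀ hq']
    nlinarith
  have bound_ge : ∀ (t : ℝ) (p : ℤ) (q : ℕ), 0 < q → ∀ x,
      x + p ≤ (fun y => F y + t)^[q] x → (p:ℝ)/(q:ℝ) ≤ τ t := by
    intro t p q hq x hx
    have h1 : x + (p:ℝ) ≤ ((g t)^q : CircleDeg1Lift) x := by rw [hgiter]; exact hx
    have h2 := CircleDeg1Lift.le_translationNumber_of_add_int_le _ h1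
    rw [CircleDeg1Lift.translationNumber_pow] at h2
    rw [htau]
    have hq' : (0:ℝ) < q := by exact_mod_cast hq
    rw [div_le_iff₀ hq']
    nlinarith
  -- continuity of τ
  have hcont : Continuous τ := by
    rw [continuous_iff_continuousAt]
    intro t₀
    apply tendsto_order.2
    constructor
    · intro a ha
      obtain ⟨r, hr1, hr2⟩ := exists_rat_btwn ha
      have hrd : ((r:ℝ)) = (r.num : ℝ) / (r.den : ℝ) := Rat.cast_def r
      have hlt : (r.num : ℝ) / (r.den : ℝ) < τ t₀ := by rw [← hrd]; exact hr2
      obtain ⟨x, hx⟩ := key_ge t₀ r.num r.den r.pos hlt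
      have hopen : IsOpen {t : ℝ | x + (r.num:ℝ) < (fun y => F y + t)^[r.den] x} :=
        isOpen_lt continuous_const (itr_cont r.den x)
      filter_upwards [hopen.mem_nhds hx] with t ht
      have := bound_ge t r.num r.den r.pos x ht.le
      calc a < (r:ℝ) := hr1
        _ = (r.num : ℝ) / (r.den : ℝ) := hrd
        _ ≤ τ t := this
    · intro b hb
      obtain ⟨r, hr1, hr2⟩ := exists_rat_btwn hb
      have hrd : ((r:ℝ)) = (r.num : ℝ) / (r.den : ℝ) := Rat.cast_def r
      have hlt : τ t₀ < (r.num : ℝ) / (r.den : ℝ) := by rw [← hrd]; exact hr1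
      obtain ⟨x, hx⟩ := key_le t₀ r.num r.den r.pos hlt
      have hopen : IsOpen {t : ℝ | (fun y => F y + t)^[r.den] x < x + (r.num:ℝ)} :=
        isOpen_lt (itr_cont r.den x) continuous_const
      filter_upwards [hopen.mem_nhds hx] with t ht
      have := bound_le t r.num r.den r.pos x ht.le
      calc τ t ≤ (r.num : ℝ) / (r.den : ℝ) := this
        _ = (r:ℝ) := hrd.symm
        _ < b := hr2
  -- integer shifts
  have hshift : ∀ (t : ℝ) (n : ℕ), τ (t + n) = τ t + n := by
    intro t n
    induction n with
    | zero => simp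
    | succ n ih =>
      have : t + (n + 1 : ℕ) = (t + n) + 1 := by push_cast; ring
      rw [this, hii, ih]
      push_cast
      ring
  -- surjectivity of τ
  have hsurjτ : ∀ α : ℝ, ∃ t, τ t = α := by
    intro α
    obtain ⟨N, hN⟩ := exists_nat_ge |α - τ 0|
    have habs := abs_le.1 hN
    have h1 : τ (0 - N) = τ 0 - N := by
      have := hshift (0 - N) N
      simp only [sub_add_cancel] at this
      linarith
    have h2 : τ (0 + N) = τ 0 + N := hshift 0 N
    have hmem : α ∈ Icc (τ (0 - N)) (τ (0 + N)) := by
      rw [h1, h2]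
      constructor <;> linarith [habs.1, habs.2]
    have hsub := intermediate_value_Icc
      (show (0:ℝ) - N ≤ 0 + N by have : (0:ℝ) ≤ N := Nat.cast_nonneg N; linarith)
      hcont.continuousOn
    obtain ⟨t, _, ht⟩ := hsub hmem
    exact ⟨t, ht⟩
  -- part (iii)
  have hfiber : ∀ α : ℝ, ∃ tl tr : ℝ, tl ≤ tr ∧ {t : ℝ | τ t = α} = Set.Icc tl tr := by
    intro α
    obtain ⟨t₀, ht₀⟩ := hsurjτ α
    have hSne : ({t : ℝ | τ t = α}).Nonempty := ⟨t₀, ht₀⟩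
    have hScl : IsClosed {t : ℝ | τ t = α} := isClosed_eq hcont continuous_const
    have hbdda : BddAbove {t : ℝ | τ t = α} := by
      refine ⟨t₀ + 1, fun t ht => ?_⟩
      by_contra hlt
      push_neg at hlt
      have := hmono hlt.le
      rw [hii, ht₀, ht] at this
      linarith
    have hbddb : BddBelow {t : ℝ | τ t = α} := by
      refine ⟨t₀ - 1, fun t ht => ?_⟩
      by_contra hlt
      push_neg at hlt
      have := hmono hlt.le
      have h1 : τ t = τ (t + 1) - 1 := by rw [hii]; ring
      have h2 : τ (t + 1) ≤ τ t₀ := hmono (by linarith)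
      rw [ht, ht₀] at *
      linarith [hii t, hmono (show t + 1 ≤ t₀ by linarith)]
    refine ⟨sInf {t : ℝ | τ t = α}, sSup {t : ℝ | τ t = α},
      csInf_le_csSup hSne hbddb hbdda, ?_⟩
    have hInf : sInf {t : ℝ | τ t = α} ∈ {t : ℝ | τ t = α} := hScl.csInf_mem hSne hbddb
    have hSup : sSup {t : ℝ | τ t = α} ∈ {t : ℝ | τ t = α} := hScl.csSup_mem hSne hbdda
    ext t
    simp only [mem_setOf_eq, mem_Icc]
    constructor
    · intro ht
      exact ⟨csInf_le hbddb ht, le_csSup hbdda ht⟩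
    · rintro ⟨h1, h2⟩
      have l1 : τ (sInf {t : ℝ | τ t = α}) ≤ τ t := hmono h1
      have l2 : τ t ≤ τ (sSup {t : ℝ | τ t = α}) := hmono h2
      rw [hInf] at l1
      rw [hSup] at l2
      linarith
  -- part (iv)
  have hiv : ∀ α : ℝ, Irrational α → ∃! t : ℝ, τ t = α := by
    intro α hα
    obtain ⟨tl, tr, hle, hIcc⟩ := hfiber α
    have htl : τ tl = α := by
      have : tl ∈ {t : ℝ | τ t = α} := by rw [hIcc]; exact ⟨le_refl _, hle⟩
      exact this
    have htr : τ tr = α := by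
      have : tr ∈ {t : ℝ | τ t = α} := by rw [hIcc]; exact ⟨hle, le_refl _⟩
      exact this
    have heq : tl = tr := by
      by_contra hne
      have hlt : tl < tr := hle.lt_of_ne hne
      have hε1 : ∃ ε : ℝ, 0 < ε ∧ ε < 1 ∧ ε ≤ tr - tl := by
        refine ⟨min (tr - tl) (1/2), ?_, ?_, ?_⟩
        · exact lt_min (by linarith) (by norm_num)
        · exact lt_of_le_of_lt (min_le_right _ _) (by norm_num)
        · exact min_le_left _ _
      obtain ⟨ε, hε0, hεlt1, hεle⟩ := hε1
      obtain ⟨n, p, hn1, hp0, hpε⟩ := dens_aux hα hε0 hεlt1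
      have hnpos : 0 < n := hn1
      -- ∃ x₁ with ((g tr)^n) x₁ ≤ x₁ + n α
      have ha : ∃ x₁ : ℝ, ((g tr)^n : CircleDeg1Lift) x₁ ≤ x₁ + n * α := by
        by_contra hc
        push_neg at hc
        have := CircleDeg1Lift.lt_translationNumber_of_forall_add_lt _
          ((g tr).continuous_pow (hgc tr) n) hc
        rw [CircleDeg1Lift.translationNumber_pow, ← htau, htr] at this
        linarith
      have hb : ∃ x₂ : ℝ, x₂ + n * α ≤ ((g tl)^n : CircleDeg1Lift) x₂ := by
        by_contra hc
        push_neg at hc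
        have := CircleDeg1Lift.translationNumber_lt_of_forall_lt_add _
          ((g tl).continuous_pow (hgc tl) n) hc
        rw [CircleDeg1Lift.translationNumber_pow, ← htau, htl] at this
        linarith
      obtain ⟨x₁, hx₁⟩ := ha
      obtain ⟨x₂, hx₂⟩ := hb
      have hsh : (fun y => F y + tl)^[n] x₁ + (tr - tl) ≤ (fun y => F y + tr)^[n] x₁ :=
        itr_shift n hn1 tl tr hle x₁
      rw [hgiter] at hx₁ hx₂
      -- displacement bounds
      have h1 : (fun y => F y + tl)^[n] x₁ ≤ x₁ + (p:ℝ) := by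
        have : (n:ℝ) * α - p < ε := hpε
        linarith
      have h2 : x₂ + (p:ℝ) ≤ (fun y => F y + tl)^[n] x₂ := by
        have : (0:ℝ) < n * α - p := hp0
        linarith
      -- IVT
      obtain ⟨x, hx⟩ := intermediate_value_univ₂
        (show Continuous fun y => (fun z => F z + tl)^[n] y from (hgc tl).iterate n)
        (continuous_id.add continuous_const) h1 h2
      have hxg : ((g tl)^n : CircleDeg1Lift) x = x + (p:ℝ) := by rw [hgiter]; exact hx
      have hrat := (g tl).translationNumber_of_map_pow_eq_add_int hxg hnpos
      rw [← htau, htl] at hrat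
      exact hα ⟨(p : ℚ) / (n : ℚ), by push_cast; rw [hrat]⟩
    refine ⟨tl, htl, fun y hy => ?_⟩
    have : y ∈ {t : ℝ | τ t = α} := hy
    rw [hIcc, ← heq] at this
    exact le_antisymm this.2 this.1
  -- part (v)
  have hv : ∀ (p : ℤ) (q : ℕ), 1 ≤ q → Nat.Coprime p.natAbs q → ∀ t₀ : ℝ,
      ({t : ℝ | τ t = (p : ℝ) / (q : ℝ)} = {t₀} ↔
        ∀ x : ℝ, (fun x => F x + t₀)^[q] x = x + (p : ℝ)) := by
    intro p q hq _ t₀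
    have hqpos : 0 < q := hq
    have hq' : (0:ℝ) < q := by exact_mod_cast hqpos
    constructor
    · intro hset
      have ht₀ : τ t₀ = (p:ℝ)/(q:ℝ) := by
        have : t₀ ∈ {t : ℝ | τ t = (p : ℝ) / (q : ℝ)} := by rw [hset]; rfl
        exact this
      by_contra hcon
      push_neg at hcon
      obtain ⟨y, hy⟩ := hcon
      rcases lt_or_gt_of_ne hy with hyl | hyg
      · -- iterate < y + p at t₀ ; move slightly right
        -- there is x₀ with iterate = x₀ + p would help; instead find t > t₀ still in fiber
        have hopen : IsOpen {t : ℝ | (fun z => F z + t)^[q] y < y + (p:ℝ)} :=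
          isOpen_lt (itr_cont q y) continuous_const
        have hmem : t₀ ∈ {t : ℝ | (fun z => F z + t)^[q] y < y + (p:ℝ)} := hyl
        obtain ⟨δ, hδ0, hδ⟩ := Metric.isOpen_iff.1 hopen t₀ hmem
        have htmem : t₀ + δ/2 ∈ {t : ℝ | (fun z => F z + t)^[q] y < y + (p:ℝ)} := by
          apply hδ
          rw [Metric.mem_ball, Real.dist_eq, show t₀ + δ/2 - t₀ = δ/2 by ring,
            abs_of_pos (by linarith)]
          linarith
        have hle1 : τ (t₀ + δ/2) ≤ (p:ℝ)/(q:ℝ) := bound_le _ p q hqpos y htmem.le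
        have hge1 : (p:ℝ)/(q:ℝ) ≤ τ (t₀ + δ/2) := by
          rw [← ht₀]; exact hmono (by linarith)
        have hfin : t₀ + δ/2 ∈ {s : ℝ | τ s = (p : ℝ) / (q : ℝ)} := le_antisymm hle1 hge1
        rw [hset, mem_singleton_iff] at hfin
        linarith
      · -- iterate > y + p at t₀ ; move slightly left
        have hopen : IsOpen {t : ℝ | y + (p:ℝ) < (fun z => F z + t)^[q] y} :=
          isOpen_lt continuous_const (itr_cont q y)
        have hmem : t₀ ∈ {t : ℝ | y + (p:ℝ) < (fun z => F z + t)^[q] y} := hyg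
        obtain ⟨δ, hδ0, hδ⟩ := Metric.isOpen_iff.1 hopen t₀ hmem
        have htmem : t₀ - δ/2 ∈ {t : ℝ | y + (p:ℝ) < (fun z => F z + t)^[q] y} := by
          apply hδ
          rw [Metric.mem_ball, Real.dist_eq, show t₀ - δ/2 - t₀ = -(δ/2) by ring,
            abs_of_neg (by linarith)]
          linarith
        have hge1 : (p:ℝ)/(q:ℝ) ≤ τ (t₀ - δ/2) := bound_ge _ p q hqpos y htmem.le
        have hle1 : τ (t₀ - δ/2) ≤ (p:ℝ)/(q:ℝ) := by
          rw [← ht₀]; exact hmono (by linarith)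
        have hfin : t₀ - δ/2 ∈ {s : ℝ | τ s = (p : ℝ) / (q : ℝ)} := le_antisymm hle1 hge1
        rw [hset, mem_singleton_iff] at hfin
        linarith
    · intro hiter
      have ht₀ : τ t₀ = (p:ℝ)/(q:ℝ) := by
        have hxg : ((g t₀)^q : CircleDeg1Lift) 0 = 0 + (p:ℝ) := by
          rw [hgiter]; exact hiter 0
        have := (g t₀).translationNumber_of_map_pow_eq_add_int hxg hqpos
        rw [← htau] at this
        exact this
      ext t
      simp only [mem_setOf_eq, mem_singleton_iff]
      constructor
      · intro ht
        by_contra hne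
        rcases lt_or_gt_of_ne hne with hlt | hgt
        · -- t < t₀ : τ t < p/q
          have hbd : ∀ x : ℝ, ((g t)^q : CircleDeg1Lift) x ≤ x + ((p:ℝ) - (t₀ - t)) := by
            intro x
            rw [hgiter]
            have := itr_shift q hq t t₀ hlt.le x
            rw [hiter x] at this
            linarith
          have := CircleDeg1Lift.translationNumber_le_of_le_add _ hbd
          rw [CircleDeg1Lift.translationNumber_pow, ← htau, ht] at this
          have hqp : (q:ℝ) * ((p:ℝ)/(q:ℝ)) = (p:ℝ) := by field_simp
          rw [hqp] at this
          linarith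
        · -- t > t₀ : τ t > p/q
          have hbd : ∀ x : ℝ, x + ((p:ℝ) + (t - t₀)) ≤ ((g t)^q : CircleDeg1Lift) x := by
            intro x
            rw [hgiter]
            have := itr_shift q hq t₀ t hgt.le x
            rw [hiter x] at this
            linarith
          have := CircleDeg1Lift.le_translationNumber_of_add_le _ hbd
          rw [CircleDeg1Lift.translationNumber_pow, ← htau, ht] at this
          have hqp : (q:ℝ) * ((p:ℝ)/(q:ℝ)) = (p:ℝ) := by field_simp
          rw [hqp] at this
          linarith
      · rintro rfl
        exact ht₀
  exact ⟨⟨hcont, hmono⟩, hii, hfiber, hiv, hv⟩
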